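/- For n = 2k even with n ≥ 6, the meander with top composition (n, 1^{k-3}, n, 1^{k-1}) and bottom composition (1^{k-1}, n, 1^{k-3}, n) contains a cycle. -/
import Mathlib


/-- `BlockArc l u v` holds when `u` and `v` (0-indexed positions) are joined by an
arc of the system of nested arcs determined by the composition `l`: the `i`-th part
`p = l.getD i 0` occupies positions `a, …, a + p - 1` where `a = (l.take i).sum`,
and contributes arcs joining `a + t` and `a + (p - 1 - t)` for `2t + 1 < p`. -/
def BlockArc (l : List ℕ) (u v : ℕ) : Prop :=
  ∃ i < l.length, ∃ t : ℕ, 2 * t + 1 < l.getD i 0 ∧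
    u = (l.take i).sum + t ∧ v = (l.take i).sum + (l.getD i 0 - 1 - t)

/-- The meander graph of the pair of compositions `(lam, mu)` on vertices
`0, …, n-1`: upper arcs from `lam`, lower arcs from `mu`. -/
def MeanderGraph (n : ℕ) (lam mu : List ℕ) : SimpleGraph (Fin n) :=
  SimpleGraph.fromRel (fun u v => BlockArc lam (u : ℕ) (v : ℕ) ∨ BlockArc mu (u : ℕ) (v : ℕ))

/-- A position `v` is covered by (is an endpoint of) an arc of the composition `l`. -/
def Covered (l : List ℕ) (v : ℕ) : Prop :=
  ∃ u, BlockArc l u v ∨ BlockArc l v u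

/-- A connected component of the meander graph is a cycle component when every one
of its vertices is covered by both an upper and a lower arc (i.e. has degree 2 in
the meander multigraph). -/
def IsCycleComp (n : ℕ) (lam mu : List ℕ)
    (c : (MeanderGraph n lam mu).ConnectedComponent) : Prop :=
  ∀ v : Fin n, (MeanderGraph n lam mu).connectedComponentMk v = c →
    Covered lam (v : ℕ) ∧ Covered mu (v : ℕ)

/-- The number of cycles of the meander `(lam, mu)` on `n` nodes. -/
noncomputable def numCycles (n : ℕ) (lam mu : List ℕ) : ℕ :=
  {c : (MeanderGraph n lam mu).ConnectedComponent | IsCycleComp n lam mu c}.ncard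

/-- The number of paths (including isolated vertices) of the meander `(lam, mu)`. -/
noncomputable def numPaths (n : ℕ) (lam mu : List ℕ) : ℕ :=
  {c : (MeanderGraph n lam mu).ConnectedComponent | ¬ IsCycleComp n lam mu c}.ncard

/-- The index of the meander `(lam, mu)` on `n` nodes:
twice the number of cycles plus the number of paths. -/
noncomputable def meanderIndex (n : ℕ) (lam mu : List ℕ) : ℕ :=
  2 * numCycles n lam mu + numPaths n lam mu

/-- For even `n = 2k` with `n ≥ 6` (i.e. `k ≥ 3`), the meander with top
composition `(n, 1^{k-3}, n, 1^{k-1})` and bottom composition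
`(1^{k-1}, n, 1^{k-3}, n)` (both summing to `2n + 2k - 4 = 6k - 4`)
contains a cycle. -/
lemma blockArc_replicate_one {m u v : ℕ} : ¬ BlockArc (List.replicate m 1) u v := by
  rintro ⟨i, hi, t, ht, -⟩
  rw [List.length_replicate] at hi
  rw [List.getD_eq_getElem _ _ (by simpa using hi), List.getElem_replicate] at ht
  omega

lemma blockArc_singleton {p u v : ℕ} : BlockArc [p] u v ↔ 2 * u + 1 < p ∧ v = p - 1 - u := by
  constructor
  · rintro ⟨i, hi, t, ht, hu, hv⟩
    have hi0 : i = 0 := by simpa using hi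
    subst hi0
    simp at ht hu hv
    omega
  · rintro ⟨h1, h2⟩
    exact ⟨0, by simp, u, by simpa using h1, by simp, by simp; omega⟩

lemma blockArc_append {l1 l2 : List ℕ} {u v : ℕ} :
    BlockArc (l1 ++ l2) u v ↔ BlockArc l1 u v ∨
      ∃ u' v', BlockArc l2 u' v' ∧ u = l1.sum + u' ∧ v = l1.sum + v' := by
  constructor
  · rintro ⟨i, hi, t, ht, hu, hv⟩
    rw [List.length_append] at hi
    rcases lt_or_ge i l1.length with h | h
    · left
      refine ⟨i, h, t, ?_, ?_, ?_⟩
      · rwa [List.getD_append _ _ _ _ h] at ht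
      · rwa [List.take_append, Nat.sub_eq_zero_of_le h.le, List.take_zero,
          List.append_nil] at hu
      · rwa [List.take_append, Nat.sub_eq_zero_of_le h.le, List.take_zero,
          List.append_nil, List.getD_append _ _ _ _ h] at hv
    · right
      rw [List.getD_append_right _ _ _ _ h] at ht hv
      rw [List.take_append, List.take_of_length_le h, List.sum_append] at hu hv
      exact ⟨(l2.take (i - l1.length)).sum + t,
        (l2.take (i - l1.length)).sum + (l2.getD (i - l1.length) 0 - 1 - t),
        ⟨i - l1.length, by omega, t, ht, rfl, rfl⟩, by omega, by omega⟩
  · rintro (⟨i, hi, t, ht, hu, hv⟩ | ⟨u', v', ⟨i, hi, t, ht, hu, hv⟩, hu', hv'⟩)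
    · refine ⟨i, by rw [List.length_append]; omega, t, ?_, ?_, ?_⟩
      · rwa [List.getD_append _ _ _ _ hi]
      · rwa [List.take_append, Nat.sub_eq_zero_of_le hi.le, List.take_zero,
          List.append_nil]
      · rwa [List.take_append, Nat.sub_eq_zero_of_le hi.le, List.take_zero,
          List.append_nil, List.getD_append _ _ _ _ hi]
    · refine ⟨l1.length + i, by rw [List.length_append]; omega, t, ?_, ?_, ?_⟩
      · rwa [List.getD_append_right _ _ _ _ (by omega), Nat.add_sub_cancel_left]
      · rw [List.take_append, List.take_of_length_le (by omega), List.sum_append,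
          Nat.add_sub_cancel_left]
        omega
      · rw [List.take_append, List.take_of_length_le (by omega), List.sum_append,
          Nat.add_sub_cancel_left, List.getD_append_right _ _ _ _ (by omega),
          Nat.add_sub_cancel_left]
        omega

lemma lam_char {k : ℕ} (hk : 3 ≤ k) {u v : ℕ} :
    BlockArc ([2 * k] ++ List.replicate (k - 3) 1 ++ [2 * k] ++ List.replicate (k - 1) 1) u v ↔
      ∃ t, t < k ∧ ((u = t ∧ v = 2 * k - 1 - t) ∨ (u = 3 * k - 3 + t ∧ v = 5 * k - 4 - t)) := by
  simp only [blockArc_append, blockArc_singleton, blockArc_replicate_one, List.sum_append,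
    List.sum_cons, List.sum_nil, List.sum_replicate, smul_eq_mul, mul_one, false_or, false_and,
    exists_false, or_false, exists_and_left]
  constructor
  · rintro (⟨h1, h2⟩ | ⟨u', v', ⟨h1, h2⟩, hu, hv⟩)
    · exact ⟨u, by omega, Or.inl ⟨rfl, by omega⟩⟩
    · exact ⟨u', by omega, Or.inr ⟨by omega, by omega⟩⟩
  · rintro ⟨t, ht, ⟨hu, hv⟩ | ⟨hu, hv⟩⟩
    · exact Or.inl ⟨by omega, by omega⟩
    · exact Or.inr ⟨t, 2 * k - 1 - t, ⟨by omega, rfl⟩, by omega, by omega⟩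

lemma mu_char {k : ℕ} (hk : 3 ≤ k) {u v : ℕ} :
    BlockArc (List.replicate (k - 1) 1 ++ [2 * k] ++ List.replicate (k - 3) 1 ++ [2 * k]) u v ↔
      ∃ t, t < k ∧ ((u = k - 1 + t ∧ v = 3 * k - 2 - t) ∨
        (u = 4 * k - 4 + t ∧ v = 6 * k - 5 - t)) := by
  simp only [blockArc_append, blockArc_singleton, blockArc_replicate_one, List.sum_append,
    List.sum_cons, List.sum_nil, List.sum_replicate, smul_eq_mul, mul_one, false_or, false_and,
    exists_false, or_false, exists_and_left]
  constructor
  · rintro (⟨u', v', ⟨h1, h2⟩, hu, hv⟩ | ⟨u', v', ⟨h1, h2⟩, hu, hv⟩)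
    · exact ⟨u', by omega, Or.inl ⟨by omega, by omega⟩⟩
    · exact ⟨u', by omega, Or.inr ⟨by omega, by omega⟩⟩
  · rintro ⟨t, ht, ⟨hu, hv⟩ | ⟨hu, hv⟩⟩
    · exact Or.inl ⟨t, 2 * k - 1 - t, ⟨by omega, rfl⟩, by omega, by omega⟩
    · exact Or.inr ⟨t, 2 * k - 1 - t, ⟨by omega, rfl⟩, by omega, by omega⟩

theorem stmt14 (k : ℕ) (hk : 3 ≤ k) :
    ∃ c, IsCycleComp (6 * k - 4)
      ([2 * k] ++ List.replicate (k - 3) 1 ++ [2 * k] ++ List.replicate (k - 1) 1)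
      (List.replicate (k - 1) 1 ++ [2 * k] ++ List.replicate (k - 3) 1 ++ [2 * k])
      c := by
  set lam := [2 * k] ++ List.replicate (k - 3) 1 ++ [2 * k] ++ List.replicate (k - 1) 1 with hlam
  set mu := List.replicate (k - 1) 1 ++ [2 * k] ++ List.replicate (k - 3) 1 ++ [2 * k] with hmu
  set G := MeanderGraph (6 * k - 4) lam mu with hG
  -- the six vertices of the cycle
  set S : ℕ → Prop := fun x =>
    x = k - 1 ∨ x = k ∨ x = 3 * k - 3 ∨ x = 3 * k - 2 ∨ x = 5 * k - 5 ∨ x = 5 * k - 4 with hSdef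
  have closure : ∀ a b : Fin (6 * k - 4), G.Adj a b → S (a : ℕ) → S (b : ℕ) := by
    intro a b hab hsa
    rw [hG, MeanderGraph, SimpleGraph.fromRel_adj] at hab
    obtain ⟨-, h | h⟩ := hab <;> rcases h with h | h <;>
      first
      | (rw [lam_char hk] at h; obtain ⟨t, ht, ⟨h1, h2⟩ | ⟨h1, h2⟩⟩ := h <;>
          (rw [hSdef] at hsa ⊢; omega))
      | (rw [mu_char hk] at h; obtain ⟨t, ht, ⟨h1, h2⟩ | ⟨h1, h2⟩⟩ := h <;>
          (rw [hSdef] at hsa ⊢; omega))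
  have key : ∀ a b : Fin (6 * k - 4), G.Walk a b → S (a : ℕ) → S (b : ℕ) := by
    intro a b p
    induction p with
    | nil => exact id
    | cons h _ ih => exact fun ha => ih (closure _ _ h ha)
  have cov : ∀ x : ℕ, S x → Covered lam x ∧ Covered mu x := by
    intro x hx
    rw [hSdef] at hx
    rcases hx with hx | hx | hx | hx | hx | hx
    · exact ⟨⟨k, Or.inr ((lam_char hk).mpr ⟨k - 1, by omega, Or.inl ⟨by omega, by omega⟩⟩)⟩,
        ⟨3 * k - 2, Or.inr ((mu_char hk).mpr ⟨0, by omega, Or.inl ⟨by omega, by omega⟩⟩)⟩⟩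
    · exact ⟨⟨k - 1, Or.inl ((lam_char hk).mpr ⟨k - 1, by omega, Or.inl ⟨by omega, by omega⟩⟩)⟩,
        ⟨3 * k - 3, Or.inr ((mu_char hk).mpr ⟨1, by omega, Or.inl ⟨by omega, by omega⟩⟩)⟩⟩
    · exact ⟨⟨5 * k - 4, Or.inr ((lam_char hk).mpr ⟨0, by omega, Or.inr ⟨by omega, by omega⟩⟩)⟩,
        ⟨k, Or.inl ((mu_char hk).mpr ⟨1, by omega, Or.inl ⟨by omega, by omega⟩⟩)⟩⟩
    · exact ⟨⟨5 * k - 5, Or.inr ((lam_char hk).mpr ⟨1, by omega, Or.inr ⟨by omega, by omega⟩⟩)⟩,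
        ⟨k - 1, Or.inl ((mu_char hk).mpr ⟨0, by omega, Or.inl ⟨by omega, by omega⟩⟩)⟩⟩
    · exact ⟨⟨3 * k - 2, Or.inl ((lam_char hk).mpr ⟨1, by omega, Or.inr ⟨by omega, by omega⟩⟩)⟩,
        ⟨5 * k - 4, Or.inr ((mu_char hk).mpr ⟨k - 1, by omega, Or.inr ⟨by omega, by omega⟩⟩)⟩⟩
    · exact ⟨⟨3 * k - 3, Or.inl ((lam_char hk).mpr ⟨0, by omega, Or.inr ⟨by omega, by omega⟩⟩)⟩,
        ⟨5 * k - 5, Or.inl ((mu_char hk).mpr ⟨k - 1, by omega, Or.inr ⟨by omega, by omega⟩⟩)⟩⟩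
  refine ⟨G.connectedComponentMk ⟨k - 1, by omega⟩, ?_⟩
  intro v hv
  have hr : G.Reachable (⟨k - 1, by omega⟩ : Fin (6 * k - 4)) v :=
    (SimpleGraph.ConnectedComponent.exact hv).symm
  obtain ⟨p⟩ := hr
  exact cov _ (key _ _ p (Or.inl rfl))
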